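/- Let P_q be a Paley graph. Define x* ∈ R^q by x*_i = 1/√q for all vertices i, and X* ∈ R^{q×q} by X*_{ii} = 1/√q, X*_{ij} = 0 if {i,j} is an edge of P_q, and X*_{ij} = 2/(q+√q) if i ≠ j and {i,j} is not an edge. Then (x*, X*) is an optimal solution of the SDP max{1ᵀx : [[X,x],[xᵀ,1]] ⪰ 0, diag(X) = x, X_{ij} = 0 ∀{i,j} ∈ E(P_q)}, with optimal value √q. -/

import Mathlib

open scoped Classical

open Matrix

section Aux
variable {n : Type} [Fintype n]

lemma psd_vecMulVec (r : n → ℝ) : (Matrix.of fun i j => r i * r j).PosSemidef := by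
  refine Matrix.posSemidef_iff_dotProduct_mulVec.mpr ⟨?_, ?_⟩
  · ext i j
    simp [Matrix.conjTranspose_apply, mul_comm]
  · intro x
    have h : (star x) ⬝ᵥ ((Matrix.of fun i j => r i * r j) *ᵥ x) = (∑ i, r i * x i) ^ 2 := by
      simp only [dotProduct, Matrix.mulVec, Matrix.of_apply, Pi.star_apply, star_trivial]
      rw [sq, Finset.sum_mul_sum]
      apply Finset.sum_congr rfl; intro i _
      rw [Finset.mul_sum]
      apply Finset.sum_congr rfl; intro j _
      ring
    rw [h]
    positivity

lemma psd_smul {M : Matrix n n ℝ} (hM : M.PosSemidef) {c : ℝ} (hc : 0 ≤ c) :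
    (c • M).PosSemidef := by
  refine Matrix.posSemidef_iff_dotProduct_mulVec.mpr ⟨?_, ?_⟩
  · show (c • M)ᴴ = c • M
    rw [Matrix.conjTranspose_smul, hM.1]
    simp
  · intro x
    rw [Matrix.smul_mulVec, dotProduct_smul]
    exact mul_nonneg hc (hM.dotProduct_mulVec_nonneg x)

lemma psd_idem {P : Matrix n n ℝ} (hsym : P.IsHermitian) (hP : P * P = (2:ℝ) • P) :
    P.PosSemidef := by
  have hPt : Pᵀ = P := hsym
  refine Matrix.PosSemidef.of_dotProduct_mulVec_nonneg hsym fun x => ?_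
  have h : (star x) ⬝ᵥ (P *ᵥ x) = (1/2) * ((P *ᵥ x) ⬝ᵥ (P *ᵥ x)) := by
    have h2 : P *ᵥ (P *ᵥ x) = (2:ℝ) • (P *ᵥ x) := by
      rw [Matrix.mulVec_mulVec, hP, Matrix.smul_mulVec]
    have h3 : x ᵥ* P = P *ᵥ x := by rw [← Matrix.mulVec_transpose, hPt]
    calc (star x) ⬝ᵥ (P *ᵥ x) = x ⬝ᵥ (P *ᵥ x) := by simp
    _ = (1/2) * (x ⬝ᵥ ((2:ℝ) • (P *ᵥ x))) := by
        rw [dotProduct_smul, smul_eq_mul]; ring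
    _ = (1/2) * (x ⬝ᵥ (P *ᵥ (P *ᵥ x))) := by rw [h2]
    _ = (1/2) * ((P *ᵥ x) ⬝ᵥ (P *ᵥ x)) := by rw [Matrix.dotProduct_mulVec, h3]
  rw [h]
  have h4 : (0:ℝ) ≤ (P *ᵥ x) ⬝ᵥ (P *ᵥ x) := Finset.sum_nonneg fun i _ => mul_self_nonneg _
  linarith

lemma psd_fromBlocks_left {P : Matrix n n ℝ} (hP : P.PosSemidef) :
    (Matrix.fromBlocks P 0 0 (0 : Matrix Unit Unit ℝ)).PosSemidef := by
  refine Matrix.posSemidef_iff_dotProduct_mulVec.mpr ⟨?_, ?_⟩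
  · exact Matrix.isHermitian_fromBlocks_iff.mpr ⟨hP.1, by simp, by simp, Matrix.isHermitian_zero⟩
  · intro x
    rw [Matrix.fromBlocks_mulVec]
    simp only [Matrix.zero_mulVec, add_zero, zero_add]
    rw [show (star x) = Sum.elim (star (x ∘ Sum.inl)) (star (x ∘ Sum.inr)) by
      ext i; cases i <;> simp]
    rw [sumElim_dotProduct_sumElim]
    have := hP.dotProduct_mulVec_nonneg (x ∘ Sum.inl)
    simp only [dotProduct_zero, add_zero]
    exact this

/-- trace pairing of two PSD matrices is nonneg -/
lemma psd_pairing {M N : Matrix n n ℝ} (hM : M.PosSemidef) (hN : N.PosSemidef) :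
    0 ≤ ∑ a, ∑ b, M a b * N a b := by
  obtain ⟨B, hB⟩ : ∃ B : Matrix n n ℝ, N = Bᴴ * B := by
    open scoped MatrixOrder in exact CStarAlgebra.nonneg_iff_eq_star_mul_self.mp hN.nonneg
  have key : ∑ a, ∑ b, M a b * N a b = ∑ k, (star (fun a => B k a)) ⬝ᵥ (M *ᵥ (fun a => B k a)) := by
    subst hB
    simp only [dotProduct, Matrix.mulVec, Matrix.mul_apply, Matrix.conjTranspose_apply,
      star_trivial, Pi.star_apply]
    simp only [Finset.mul_sum]
    have step : ∀ a : n, ∑ b : n, ∑ k : n, M a b * (B k a * B k b)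
        = ∑ k : n, ∑ b : n, M a b * (B k a * B k b) := fun a => Finset.sum_comm
    simp only [step]
    rw [Finset.sum_comm]
    apply Finset.sum_congr rfl; intro k _
    apply Finset.sum_congr rfl; intro a _
    apply Finset.sum_congr rfl; intro b _
    ring
  rw [key]
  exact Finset.sum_nonneg fun k _ => hM.dotProduct_mulVec_nonneg _
end Aux


-- abstract idempotence lemma
lemma idem_abstract {n : Type} [Fintype n] [DecidableEq n]
    (X Y : Matrix n n ℝ) (a b c : ℝ)
    (hXY : X * Y = 0) (hYX : Y * X = 0) (hYY : Y * Y = c • Y)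
    (hXX : X * X = c • (1 : Matrix n n ℝ) - Y)
    (haa : a * a * c = 1) (hbb : b * b * c = a * a) :
    ((1 : Matrix n n ℝ) - a • X - b • Y) * ((1 : Matrix n n ℝ) - a • X - b • Y)
      = (2:ℝ) • ((1 : Matrix n n ℝ) - a • X - b • Y) := by
  have expand : ((1 : Matrix n n ℝ) - a • X - b • Y) * ((1 : Matrix n n ℝ) - a • X - b • Y)
      = (1 + a * a * c) • (1 : Matrix n n ℝ) - (2*a) • X
        + (-(2*b) - a*a + b*b*c) • Y := by
    simp only [sub_mul, mul_sub, Matrix.smul_mul, Matrix.mul_smul, Matrix.one_mul,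
      Matrix.mul_one, hXY, hYX, hYY, hXX, smul_sub, smul_smul, smul_zero, sub_zero]
    module
  rw [expand, haa, hbb]
  module

/-- The Paley graph on a finite field: vertices are field elements, two vertices
adjacent iff their difference is a nonzero square. -/
def Paley (F : Type) [Field F] : SimpleGraph F :=
  SimpleGraph.fromRel (fun x y => ∃ z : F, z ≠ 0 ∧ x - y = z ^ 2)

section NT
variable (F : Type) [Field F] [Fintype F]

lemma char_ne_two (hq : Fintype.card F % 4 = 1) : ringChar F ≠ 2 := by
  intro h
  have := FiniteField.even_card_of_char_two h
  omega

lemma chi_neg_one (hq : Fintype.card F % 4 = 1) : quadraticChar F (-1) = 1 := by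
  rw [quadraticChar_neg_one (char_ne_two F hq)]
  exact ZMod.χ₄_nat_one_mod_four hq

lemma chi_shift_sum (h2 : ringChar F ≠ 2) {b : F} (hb : b ≠ 0) :
    ∑ x : F, quadraticChar F x * quadraticChar F (x + b) = -1 := by
  have key : ∀ x : F, x ≠ 0 → (quadraticChar F x : ℤ) * quadraticChar F (x + b)
      = quadraticChar F (1 + b * x⁻¹) := by
    intro x hx
    have hxx : x * (1 + b * x⁻¹) = x + b := by field_simp
    have h1 : (quadraticChar F (x + b) : ℤ) = quadraticChar F x * quadraticChar F (1 + b * x⁻¹) := by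
      rw [← _root_.map_mul, hxx]
    rw [h1, ← mul_assoc]
    have : (quadraticChar F x : ℤ) * quadraticChar F x = 1 := by
      have := quadraticChar_sq_one hx
      rwa [sq] at this
    rw [this, one_mul]
  have h0 : ∑ x : F, (quadraticChar F x : ℤ) * quadraticChar F (x + b)
      = ∑ x ∈ Finset.univ.erase (0 : F), quadraticChar F (1 + b * x⁻¹) := by
    rw [← Finset.sum_erase_add _ _ (Finset.mem_univ (0:F))]
    simp only [quadraticChar_zero, MulChar.map_zero]
    rw [show ((0:ℤ) * quadraticChar F (0 + b) : ℤ) = 0 by ring, add_zero]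
    exact Finset.sum_congr rfl fun x hx => key x (Finset.ne_of_mem_erase hx)
  rw [h0]
  have h1 : ∑ x ∈ Finset.univ.erase (0 : F), (quadraticChar F (1 + b * x⁻¹) : ℤ)
      = ∑ y ∈ Finset.univ.erase (1 : F), quadraticChar F y := by
    apply Finset.sum_nbij' (fun x => 1 + b * x⁻¹) (fun y => b * (y - 1)⁻¹)
    · intro a ha
      have ha' : a ≠ 0 := Finset.ne_of_mem_erase ha
      simp only [Finset.mem_erase, Finset.mem_univ, and_true]
      intro h
      have : b * a⁻¹ = 0 := by linear_combination h
      simp only [mul_eq_zero, inv_eq_zero] at this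
      tauto
    · intro y hy
      have hy' : y ≠ 1 := Finset.ne_of_mem_erase hy
      rw [Finset.mem_erase]
      refine ⟨?_, Finset.mem_univ _⟩
      have h3 : y - 1 ≠ 0 := sub_ne_zero.mpr hy'
      simp only [ne_eq, mul_eq_zero, inv_eq_zero, not_or]
      tauto
    · intro a ha
      have ha' : a ≠ 0 := Finset.ne_of_mem_erase ha
      field_simp
      rw [add_sub_cancel_left, div_self hb]
    · intro y hy
      have hy' : y - 1 ≠ 0 := sub_ne_zero.mpr (Finset.ne_of_mem_erase hy)
      field_simp
      ring
    · intro a _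
      rfl
  rw [h1]
  have h4 : (∑ y ∈ Finset.univ.erase (1:F), quadraticChar F y) + quadraticChar F 1
      = ∑ y : F, quadraticChar F y := Finset.sum_erase_add _ _ (Finset.mem_univ (1:F))
  rw [quadraticChar_sum_zero h2, _root_.map_one] at h4
  omega
end NT

noncomputable def chiR (F : Type) [Field F] [Fintype F] : F → ℝ :=
  fun a => ((quadraticChar F a : ℤ) : ℝ)

variable (F : Type) [Field F] [Fintype F]

lemma chiR_zero : chiR F 0 = 0 := by simp [chiR]

lemma chiR_dichotomy {a : F} (ha : a ≠ 0) : chiR F a = 1 ∨ chiR F a = -1 := by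
  rcases quadraticChar_dichotomy ha with h | h <;> [left; right] <;> simp [chiR, h]

lemma chiR_sq {a : F} (ha : a ≠ 0) : chiR F a * chiR F a = 1 := by
  rcases chiR_dichotomy F ha with h | h <;> rw [h] <;> norm_num

lemma chiR_neg (hq : Fintype.card F % 4 = 1) (a : F) : chiR F (-a) = chiR F a := by
  have h : (-a) = (-1) * a := by ring
  rw [chiR, h, _root_.map_mul, chi_neg_one F hq]
  push_cast
  simp [chiR]

lemma chiR_sub_symm (hq : Fintype.card F % 4 = 1) (i j : F) :
    chiR F (j - i) = chiR F (i - j) := by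
  rw [show j - i = -(i - j) by ring, chiR_neg F hq]

lemma chiR_sum (h2 : ringChar F ≠ 2) : ∑ a : F, chiR F a = 0 := by
  have := quadraticChar_sum_zero (F := F) h2
  unfold chiR
  push_cast
  exact_mod_cast congrArg (fun z : ℤ => (z : ℝ)) this

lemma chiR_sum_sub (h2 : ringChar F ≠ 2) (i : F) : ∑ k : F, chiR F (i - k) = 0 := by
  rw [← chiR_sum F h2]
  exact Fintype.sum_equiv (Equiv.subLeft i) _ _ (fun k => rfl)

lemma chiR_sum_sub' (h2 : ringChar F ≠ 2) (j : F) : ∑ k : F, chiR F (k - j) = 0 := by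
  rw [← chiR_sum F h2]
  exact Fintype.sum_equiv (Equiv.subRight j) _ _ (fun k => rfl)

lemma chiR_conv (hq : Fintype.card F % 4 = 1) (i j : F) :
    ∑ k : F, chiR F (i - k) * chiR F (k - j)
      = if i = j then ((Fintype.card F : ℝ) - 1) else -1 := by
  have h2 : ringChar F ≠ 2 := char_ne_two F hq
  have reindex : ∑ k : F, chiR F (i - k) * chiR F (k - j)
      = ∑ x : F, chiR F x * chiR F (x + (j - i)) := by
    apply Fintype.sum_equiv (Equiv.subLeft i)
    intro x
    simp only [Equiv.subLeft_apply]
    rw [show (i - x) + (j - i) = -(x - j) by ring, chiR_neg F hq]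
  rw [reindex]
  by_cases h : i = j
  · subst h
    simp only [sub_self, if_true, add_zero]
    have hterm : ∀ x : F, chiR F x * chiR F x = if x = 0 then 0 else 1 := by
      intro x
      by_cases hx : x = 0
      · simp [hx, chiR_zero]
      · simp [hx, chiR_sq F hx]
    simp only [hterm]
    rw [← Finset.sum_erase_add _ _ (Finset.mem_univ (0:F))]
    rw [if_pos rfl, add_zero]
    have : ∀ x ∈ Finset.univ.erase (0:F), (if x = 0 then (0:ℝ) else 1) = 1 := by
      intro x hx
      rw [if_neg (Finset.ne_of_mem_erase hx)]
    rw [Finset.sum_congr rfl this, Finset.sum_const, Finset.card_erase_of_mem (Finset.mem_univ _),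
      Finset.card_univ, nsmul_eq_mul, mul_one]
    have hc : 1 ≤ Fintype.card F := Fintype.card_pos
    rw [Nat.cast_sub hc]
    push_cast
    ring
  · rw [if_neg h]
    have hb : j - i ≠ 0 := sub_ne_zero.mpr (Ne.symm h)
    have hz := chi_shift_sum F h2 hb
    have hz' : ((∑ x : F, quadraticChar F x * quadraticChar F (x + (j-i)) : ℤ) : ℝ) = -1 := by
      exact_mod_cast congrArg (fun z : ℤ => (z : ℝ)) hz
    rw [← hz']
    push_cast
    rfl

lemma chiR_adj (hq : Fintype.card F % 4 = 1) {i j : F} (hij : i ≠ j) :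
    (Paley F).Adj i j ↔ chiR F (i - j) = 1 := by
  have h2 : ringChar F ≠ 2 := char_ne_two F hq
  have hij0 : i - j ≠ 0 := sub_ne_zero.mpr hij
  have hji0 : j - i ≠ 0 := sub_ne_zero.mpr (Ne.symm hij)
  have hsq : ∀ a : F, a ≠ 0 → ((∃ z : F, z ≠ 0 ∧ a = z ^ 2) ↔ chiR F a = 1) := by
    intro a ha
    rw [show (chiR F a = 1) ↔ quadraticChar F a = 1 by
      unfold chiR; constructor <;> intro h <;> exact_mod_cast h]
    rw [quadraticChar_one_iff_isSquare ha]
    constructor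
    · rintro ⟨z, _, rfl⟩
      exact ⟨z, (sq z).symm ▸ by ring⟩
    · rintro ⟨r, rfl⟩
      refine ⟨r, fun h => ha (by rw [h]; ring), by ring⟩
  rw [Paley, SimpleGraph.fromRel_adj]
  rw [hsq _ hij0, hsq _ hji0, chiR_sub_symm F hq]
  tauto



section Mats
variable (F : Type) [Field F] [Fintype F]

noncomputable def Cmat : Matrix F F ℝ := Matrix.of fun i j => chiR F (i - j)
noncomputable def Jmat : Matrix F F ℝ := Matrix.of fun _ _ => (1:ℝ)

/-- P(ε) = I - (ε/√q) C - (1/q) J -/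
noncomputable def Pmat (ε : ℝ) : Matrix F F ℝ :=
  (1 : Matrix F F ℝ) - (ε / Real.sqrt (Fintype.card F)) • Cmat F
    - ((Fintype.card F : ℝ))⁻¹ • Jmat F

lemma cardF_pos : 0 < (Fintype.card F : ℝ) := by
  have : 0 < Fintype.card F := Fintype.card_pos
  exact_mod_cast this

lemma sqrtq_pos : 0 < Real.sqrt (Fintype.card F) :=
  Real.sqrt_pos.mpr (cardF_pos F)

lemma sqrtq_sq : Real.sqrt (Fintype.card F) * Real.sqrt (Fintype.card F) = (Fintype.card F : ℝ) :=
  Real.mul_self_sqrt (le_of_lt (cardF_pos F))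

lemma hCJ (hq : Fintype.card F % 4 = 1) : Cmat F * Jmat F = 0 := by
  ext i j
  simp only [Matrix.mul_apply, Cmat, Jmat, Matrix.of_apply, mul_one, Matrix.zero_apply]
  exact chiR_sum_sub F (char_ne_two F hq) i

lemma hJC (hq : Fintype.card F % 4 = 1) : Jmat F * Cmat F = 0 := by
  ext i j
  simp only [Matrix.mul_apply, Cmat, Jmat, Matrix.of_apply, one_mul, Matrix.zero_apply]
  exact chiR_sum_sub' F (char_ne_two F hq) j

lemma hJJ : Jmat F * Jmat F = ((Fintype.card F : ℝ)) • Jmat F := by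
  ext i j
  simp [Matrix.mul_apply, Jmat, Finset.sum_const, Finset.card_univ]

lemma hCC (hq : Fintype.card F % 4 = 1) : Cmat F * Cmat F = ((Fintype.card F : ℝ)) • (1 : Matrix F F ℝ) - Jmat F := by
  ext i j
  simp only [Matrix.mul_apply, Cmat, Jmat, Matrix.of_apply, Matrix.sub_apply,
    Matrix.smul_apply, Matrix.one_apply, smul_eq_mul]
  rw [chiR_conv F hq i j]
  by_cases h : i = j <;> simp [h]

lemma Pmat_idem (hq : Fintype.card F % 4 = 1) {ε : ℝ} (hε : ε * ε = 1) :
    Pmat F ε * Pmat F ε = (2:ℝ) • Pmat F ε := by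
  unfold Pmat
  apply idem_abstract _ _ _ _ _ (hCJ F hq) (hJC F hq) (hJJ F) (hCC F hq)
  · rw [div_mul_div_comm, hε]
    rw [sqrtq_sq F]
    have := cardF_pos F
    field_simp
  · have h0 := cardF_pos F
    rw [div_mul_div_comm, hε, sqrtq_sq F]
    field_simp

lemma Pmat_herm (hq : Fintype.card F % 4 = 1) (ε : ℝ) : (Pmat F ε).IsHermitian := by
  show (Pmat F ε)ᴴ = Pmat F ε
  ext i j
  simp only [Pmat, Cmat, Jmat, Matrix.conjTranspose_apply, Matrix.sub_apply, Matrix.smul_apply,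
    Matrix.one_apply, Matrix.of_apply, star_trivial, smul_eq_mul]
  rw [chiR_sub_symm F hq j i]
  by_cases h : i = j
  · subst h; simp
  · rw [if_neg h, if_neg (Ne.symm h)]

lemma Pmat_psd (hq : Fintype.card F % 4 = 1) {ε : ℝ} (hε : ε * ε = 1) : (Pmat F ε).PosSemidef :=
  psd_idem (Pmat_herm F hq ε) (Pmat_idem F hq hε)

lemma Pmat_entry (ε : ℝ) (i j : F) :
    Pmat F ε i j = (if i = j then (1:ℝ) else 0)
      - ε * chiR F (i - j) / Real.sqrt (Fintype.card F) - ((Fintype.card F : ℝ))⁻¹ := by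
  simp only [Pmat, Cmat, Jmat, Matrix.sub_apply, Matrix.smul_apply, Matrix.one_apply,
    Matrix.of_apply, smul_eq_mul, mul_one]
  ring_nf

end Mats

/-- Feasibility for the SDP formulation ϑ₁:
max 1ᵀx s.t. [[X, x],[xᵀ,1]] ⪰ 0, diag(X) = x, X_{ij} = 0 on edges. -/
def Theta1Feasible {V : Type} [Fintype V] (G : SimpleGraph V)
    (x : V → ℝ) (X : Matrix V V ℝ) : Prop :=
  (Matrix.fromBlocks X (Matrix.of fun i (_ : Unit) => x i)
      (Matrix.of fun (_ : Unit) j => x j) 1).PosSemidef ∧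
  (∀ i, X i i = x i) ∧ (∀ i j, G.Adj i j → X i j = 0)

/-- The vector x* with all entries 1/√q. -/
noncomputable def xstar (F : Type) (q : ℕ) : F → ℝ := fun _ => 1 / Real.sqrt q

/-- The matrix X* with diagonal 1/√q, zero on edges of the Paley graph and
2/(q+√q) on non-edges. -/
noncomputable def Xstar (F : Type) [Field F] (q : ℕ) : Matrix F F ℝ :=
  Matrix.of fun i j =>
    if i = j then 1 / Real.sqrt q
    else if (Paley F).Adj i j then 0 else 2 / (q + Real.sqrt q)

theorem stmt9 (q : ℕ) (F : Type) [Field F] [Fintype F]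
    (hcard : Fintype.card F = q) (hq : q % 4 = 1) :
    Theta1Feasible (Paley F) (xstar F q) (Xstar F q) ∧
    (∑ i : F, xstar F q i = Real.sqrt q) ∧
    (∀ (x : F → ℝ) (X : Matrix F F ℝ),
      Theta1Feasible (Paley F) x X → ∑ i, x i ≤ Real.sqrt q) := by
  subst hcard
  set q := Fintype.card F with hqdef
  set s := Real.sqrt q with hsdef
  have hq' : (q:ℝ) = s * s := (sqrtq_sq F).symm
  have hs0 : 0 < s := sqrtq_pos F
  have hs1 : (0:ℝ) < 1 + s := by linarith
  have hchi : ∀ {i j : F}, i ≠ j → ¬ (Paley F).Adj i j → chiR F (i - j) = -1 := by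
    intro i j hij hadj
    rcases chiR_dichotomy F (sub_ne_zero.mpr hij) with h1 | h1
    · exact absurd ((chiR_adj F hq hij).mpr h1) hadj
    · exact h1
  -- the primal decomposition
  have hprimal : Matrix.fromBlocks (Xstar F q) (Matrix.of fun i (_ : Unit) => xstar F q i)
      (Matrix.of fun (_ : Unit) j => xstar F q j) 1
      = (1/(s+1)) • Matrix.fromBlocks (Pmat F 1) 0 0 (0 : Matrix Unit Unit ℝ)
        + Matrix.of (fun a b => (Sum.elim (fun _ : F => 1/s) (fun _ : Unit => (1:ℝ))) a
            * (Sum.elim (fun _ : F => 1/s) (fun _ : Unit => (1:ℝ))) b) := by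
    ext a b
    simp only [Matrix.add_apply, Matrix.smul_apply, Matrix.of_apply, smul_eq_mul]
    cases a with
    | inl i =>
      cases b with
      | inl j =>
        simp only [Matrix.fromBlocks_apply₁₁, Sum.elim_inl]
        rw [Pmat_entry, Xstar]
        by_cases h : i = j
        · subst h
          simp only [Matrix.of_apply, if_pos rfl, if_true, sub_self, chiR_zero, mul_zero, zero_div]
          rw [← hsdef]
          rw [hq']
          field_simp
          ring
        · by_cases hadj : (Paley F).Adj i j
          · have hx : chiR F (i - j) = 1 := (chiR_adj F hq h).mp hadj
            simp only [Matrix.of_apply, if_neg h, if_pos hadj, hx]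
            rw [← hsdef]
            rw [hq']
            field_simp
            ring
          · have hx : chiR F (i - j) = -1 := hchi h hadj
            simp only [Matrix.of_apply, if_neg h, if_neg hadj, hx]
            rw [← hsdef]
            rw [hq']
            field_simp
            all_goals ring
      | inr t =>
        simp only [Matrix.fromBlocks_apply₁₂, Sum.elim_inl, Sum.elim_inr, Matrix.of_apply,
          Matrix.zero_apply, mul_zero, zero_add, mul_one, xstar]
        rfl
    | inr t =>
      cases b with
      | inl j =>
        simp only [Matrix.fromBlocks_apply₂₁, Sum.elim_inl, Sum.elim_inr, Matrix.of_apply,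
          Matrix.zero_apply, mul_zero, zero_add, one_mul, xstar]
        rfl
      | inr t' =>
        simp only [Matrix.fromBlocks_apply₂₂, Sum.elim_inr, Matrix.zero_apply, mul_zero,
          zero_add, mul_one]
        rw [show t = t' from rfl]
        simp [Matrix.one_apply]
  refine ⟨⟨?_, ?_, ?_⟩, ?_, ?_⟩
  · -- PSD of primal
    rw [hprimal]
    exact Matrix.PosSemidef.add
      (psd_smul (psd_fromBlocks_left (Pmat_psd F hq (by norm_num))) (by positivity))
      (psd_vecMulVec _)
  · intro i
    simp [Xstar, xstar]
  · intro i j hadj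
    have hij : i ≠ j := hadj.ne
    simp [Xstar, if_neg hij, if_pos hadj]
  · -- sum of xstar
    have hxsum : ∑ i : F, xstar F q i = (q : ℝ) * (1/s) := by
      have h0 : ∑ i : F, xstar F q i = ∑ _i : F, 1/s := Finset.sum_congr rfl (fun i _ => rfl)
      rw [h0, Finset.sum_const, Finset.card_univ, nsmul_eq_mul]
    rw [hxsum, hq']
    field_simp
  · -- optimality
    rintro x X ⟨hPSD, hdiag, hedge⟩
    set u : F ⊕ Unit → ℝ := Sum.elim (fun _ : F => (1:ℝ)) (fun _ : Unit => -s) with hu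
    set N : Matrix (F ⊕ Unit) (F ⊕ Unit) ℝ :=
      (s/(1+s)) • Matrix.fromBlocks (Pmat F (-1)) 0 0 (0 : Matrix Unit Unit ℝ)
        + (1/s) • Matrix.of (fun a b => u a * u b) with hN
    have hNpsd : N.PosSemidef :=
      Matrix.PosSemidef.add
        (psd_smul (psd_fromBlocks_left (Pmat_psd F hq (by norm_num))) (by positivity))
        (psd_smul (psd_vecMulVec u) (by positivity))
    have hN11diag : ∀ i : F, N (Sum.inl i) (Sum.inl i) = 1 := by
      intro i
      simp only [hN, Matrix.add_apply, Matrix.smul_apply, Matrix.of_apply, smul_eq_mul,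
        Matrix.fromBlocks_apply₁₁, hu, Sum.elim_inl]
      rw [Pmat_entry]
      simp only [if_pos rfl, if_true, sub_self, chiR_zero, mul_zero, zero_div]
      rw [hq']
      field_simp
      ring
    have hN11non : ∀ i j : F, i ≠ j → ¬ (Paley F).Adj i j → N (Sum.inl i) (Sum.inl j) = 0 := by
      intro i j hij hadj
      simp only [hN, Matrix.add_apply, Matrix.smul_apply, Matrix.of_apply, smul_eq_mul,
        Matrix.fromBlocks_apply₁₁, hu, Sum.elim_inl]
      rw [Pmat_entry, hchi hij hadj]
      simp only [if_neg hij]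
      rw [← hsdef]
      rw [hq']
      field_simp
      ring
    have hN12 : ∀ (i : F) (t : Unit), N (Sum.inl i) (Sum.inr t) = -1 := by
      intro i t
      simp only [hN, Matrix.add_apply, Matrix.smul_apply, Matrix.of_apply, smul_eq_mul,
        Matrix.fromBlocks_apply₁₂, hu, Sum.elim_inl, Sum.elim_inr, Matrix.zero_apply]
      field_simp
      ring
    have hN21 : ∀ (t : Unit) (j : F), N (Sum.inr t) (Sum.inl j) = -1 := by
      intro t j
      simp only [hN, Matrix.add_apply, Matrix.smul_apply, Matrix.of_apply, smul_eq_mul,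
        Matrix.fromBlocks_apply₂₁, hu, Sum.elim_inl, Sum.elim_inr, Matrix.zero_apply]
      field_simp
      ring
    have hN22 : ∀ (t t' : Unit), N (Sum.inr t) (Sum.inr t') = s := by
      intro t t'
      simp only [hN, Matrix.add_apply, Matrix.smul_apply, Matrix.of_apply, smul_eq_mul,
        Matrix.fromBlocks_apply₂₂, hu, Sum.elim_inr, Matrix.zero_apply]
      field_simp
      ring
    set M : Matrix (F ⊕ Unit) (F ⊕ Unit) ℝ :=
      Matrix.fromBlocks X (Matrix.of fun i (_ : Unit) => x i)
        (Matrix.of fun (_ : Unit) j => x j) 1 with hM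
    have hpair := psd_pairing hPSD hNpsd
    have hcompute : ∑ a, ∑ b, M a b * N a b = s - ∑ i, x i := by
      rw [Fintype.sum_sum_type]
      have hinner1 : ∀ i : F, ∑ b, M (Sum.inl i) b * N (Sum.inl i) b = 0 := by
        intro i
        rw [Fintype.sum_sum_type]
        have h1 : ∑ j : F, M (Sum.inl i) (Sum.inl j) * N (Sum.inl i) (Sum.inl j) = x i := by
          rw [Finset.sum_eq_single i]
          · simp only [hM, Matrix.fromBlocks_apply₁₁]
            rw [hdiag i, hN11diag i, mul_one]
          · intro j _ hji
            have hij : i ≠ j := Ne.symm hji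
            by_cases hadj : (Paley F).Adj i j
            · simp only [hM, Matrix.fromBlocks_apply₁₁]
              rw [hedge i j hadj, zero_mul]
            · rw [hN11non i j hij hadj, mul_zero]
          · intro h; exact absurd (Finset.mem_univ i) h
        have h2 : ∑ t : Unit, M (Sum.inl i) (Sum.inr t) * N (Sum.inl i) (Sum.inr t) = -x i := by
          rw [Fintype.sum_unique]
          simp only [hM, Matrix.fromBlocks_apply₁₂, Matrix.of_apply]
          rw [hN12 i ()]
          ring
        rw [h1, h2]
        ring
      have hinner2 : ∀ t : Unit, ∑ b, M (Sum.inr t) b * N (Sum.inr t) b = s - ∑ j, x j := by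
        intro t
        rw [Fintype.sum_sum_type]
        have h1 : ∑ j : F, M (Sum.inr t) (Sum.inl j) * N (Sum.inr t) (Sum.inl j)
            = -∑ j, x j := by
          rw [← Finset.sum_neg_distrib]
          apply Finset.sum_congr rfl
          intro j _
          simp only [hM, Matrix.fromBlocks_apply₂₁, Matrix.of_apply]
          rw [hN21 t j]
          ring
        have h2 : ∑ t' : Unit, M (Sum.inr t) (Sum.inr t') * N (Sum.inr t) (Sum.inr t') = s := by
          rw [Fintype.sum_unique]
          simp only [hM, Matrix.fromBlocks_apply₂₂]
          rw [hN22 t ()]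
          rw [show ((1 : Matrix Unit Unit ℝ) t t) = 1 by simp [Matrix.one_apply]]
          ring
        rw [h1, h2]
        ring
      rw [Finset.sum_congr rfl (fun i _ => hinner1 i), Finset.sum_congr rfl (fun t _ => hinner2 t)]
      simp
    rw [hcompute] at hpair
    linarith
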